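/- Let U be p×n and W be n×n with U*U + W*W = I_n and I_n - W invertible. Define X = I_p - U(I_n - W*)^{-1}U* and Y = (I_n - W)(I_n - W*)^{-1}U*. Then the block matrix U_0 = [[X, U],[Y, W]] is unitary. -/

import Mathlib

open Matrix

private lemma uc_key {p n : ℕ} (U : Matrix (Fin p) (Fin n) ℂ) (V : Matrix (Fin n) (Fin p) ℂ)
    (B C Bi Ci : Matrix (Fin n) (Fin n) ℂ)
    (hBiB : Bi * B = 1) (hCCi : C * Ci = 1)
    (hK : V * U = B + C - B * C) :
    Bi * (V * U) * Ci = Bi + Ci - 1 := by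
  have e1 : Bi * (V * U) * Ci = Bi * B * Ci + Bi * (C * Ci) - Bi * (B * (C * Ci)) := by
    rw [hK]; noncomm_ring
  simp only [hCCi, hBiB, mul_one, one_mul] at e1
  rw [e1]; abel

private lemma uc_block1 {p n : ℕ} (U : Matrix (Fin p) (Fin n) ℂ) (V : Matrix (Fin n) (Fin p) ℂ)
    (B C Bi Ci : Matrix (Fin n) (Fin n) ℂ)
    (hBiB : Bi * B = 1) (hCCi : C * Ci = 1)
    (hK : V * U = B + C - B * C) :
    (1 - U * Bi * V) * (1 - U * Ci * V) + U * V = 1 := by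
  have key := uc_key U V B C Bi Ci hBiB hCCi hK
  have hT : U * Bi * V * (U * Ci * V) = U * Bi * V + U * Ci * V - U * V := by
    have a : U * Bi * V * (U * Ci * V) = U * (Bi * (V * U) * Ci) * V := by
      simp only [Matrix.mul_assoc]
    rw [a, key]
    simp only [Matrix.mul_sub, Matrix.mul_add, Matrix.sub_mul, Matrix.add_mul,
      Matrix.mul_one, Matrix.one_mul]
  simp only [Matrix.sub_mul, Matrix.mul_sub, Matrix.one_mul, Matrix.mul_one]
  rw [hT]; abel

private lemma uc_block2 {p n : ℕ} (U : Matrix (Fin p) (Fin n) ℂ) (V : Matrix (Fin n) (Fin p) ℂ)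
    (B C Bi Ci : Matrix (Fin n) (Fin n) ℂ)
    (hBiB : Bi * B = 1) (hCCi : C * Ci = 1)
    (hK : V * U = B + C - B * C) :
    (1 - U * Bi * V) * (U * Ci * B) + U * (1 - B) = 0 := by
  have key := uc_key U V B C Bi Ci hBiB hCCi hK
  have hT : U * Bi * V * (U * Ci * B) = U + U * Ci * B - U * B := by
    have a : U * Bi * V * (U * Ci * B) = U * (Bi * (V * U) * Ci) * B := by
      simp only [Matrix.mul_assoc]
    rw [a, key]
    simp only [Matrix.mul_sub, Matrix.mul_add, Matrix.sub_mul, Matrix.add_mul,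
      Matrix.mul_one, Matrix.one_mul]
    rw [Matrix.mul_assoc U Bi B, hBiB, Matrix.mul_one]
  simp only [Matrix.sub_mul, Matrix.mul_sub, Matrix.one_mul, Matrix.mul_one]
  rw [hT]; abel

private lemma uc_block3 {p n : ℕ} (U : Matrix (Fin p) (Fin n) ℂ) (V : Matrix (Fin n) (Fin p) ℂ)
    (B C Bi Ci : Matrix (Fin n) (Fin n) ℂ)
    (hBiB : Bi * B = 1) (hCCi : C * Ci = 1)
    (hK : V * U = B + C - B * C) :
    (C * Bi * V) * (1 - U * Ci * V) + (1 - C) * V = 0 := by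
  have key := uc_key U V B C Bi Ci hBiB hCCi hK
  have hT : C * Bi * V * (U * Ci * V) = C * Bi * V + V - C * V := by
    have a : C * Bi * V * (U * Ci * V) = C * (Bi * (V * U) * Ci) * V := by
      simp only [Matrix.mul_assoc]
    rw [a, key]
    simp only [Matrix.mul_sub, Matrix.mul_add, Matrix.sub_mul, Matrix.add_mul,
      Matrix.mul_one, Matrix.one_mul]
    rw [hCCi, Matrix.one_mul]
  simp only [Matrix.sub_mul, Matrix.mul_sub, Matrix.one_mul, Matrix.mul_one]
  rw [hT]; abel

private lemma uc_block4 {p n : ℕ} (U : Matrix (Fin p) (Fin n) ℂ) (V : Matrix (Fin n) (Fin p) ℂ)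
    (B C Bi Ci : Matrix (Fin n) (Fin n) ℂ)
    (hBiB : Bi * B = 1) (hCCi : C * Ci = 1)
    (hK : V * U = B + C - B * C) :
    (C * Bi * V) * (U * Ci * B) + (1 - C) * (1 - B) = 1 := by
  have key := uc_key U V B C Bi Ci hBiB hCCi hK
  have hT : C * Bi * V * (U * Ci * B) = C + B - C * B := by
    have a : C * Bi * V * (U * Ci * B) = C * (Bi * (V * U) * Ci) * B := by
      simp only [Matrix.mul_assoc]
    rw [a, key]
    simp only [Matrix.mul_sub, Matrix.mul_add, Matrix.sub_mul, Matrix.add_mul,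
      Matrix.mul_one, Matrix.one_mul]
    rw [Matrix.mul_assoc C Bi B, hBiB, Matrix.mul_one, hCCi, Matrix.one_mul]
  rw [hT]
  noncomm_ring

theorem unitary_completion_explicit {p n : ℕ}
    (U : Matrix (Fin p) (Fin n) ℂ) (W : Matrix (Fin n) (Fin n) ℂ)
    (hon : Uᴴ * U + Wᴴ * W = 1)
    (hinv : IsUnit (1 - W : Matrix (Fin n) (Fin n) ℂ)) :
    Matrix.fromBlocks
      (1 - U * (1 - Wᴴ)⁻¹ * Uᴴ) U
      ((1 - W) * (1 - Wᴴ)⁻¹ * Uᴴ) W ∈ Matrix.unitaryGroup (Fin p ⊕ Fin n) ℂ := by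
  have hB : IsUnit (1 - Wᴴ : Matrix (Fin n) (Fin n) ℂ) := by
    have := hinv.star
    simpa [Matrix.star_eq_conjTranspose] using this
  have hCd : IsUnit (1 - W : Matrix (Fin n) (Fin n) ℂ).det :=
    (Matrix.isUnit_iff_isUnit_det _).mp hinv
  have hBd : IsUnit (1 - Wᴴ : Matrix (Fin n) (Fin n) ℂ).det :=
    (Matrix.isUnit_iff_isUnit_det _).mp hB
  have hBiB : (1 - Wᴴ : Matrix (Fin n) (Fin n) ℂ)⁻¹ * (1 - Wᴴ) = 1 :=
    Matrix.nonsing_inv_mul _ hBd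
  have hCCi : (1 - W : Matrix (Fin n) (Fin n) ℂ) * (1 - W)⁻¹ = 1 :=
    Matrix.mul_nonsing_inv _ hCd
  have hK : Uᴴ * U = (1 - Wᴴ) + (1 - W) - (1 - Wᴴ) * (1 - W) := by
    have h : Uᴴ * U = 1 - Wᴴ * W := by rw [← hon]; noncomm_ring
    rw [h]; noncomm_ring
  have b1 := uc_block1 U Uᴴ (1 - Wᴴ) (1 - W) (1 - Wᴴ)⁻¹ (1 - W)⁻¹ hBiB hCCi hK
  have b2 := uc_block2 U Uᴴ (1 - Wᴴ) (1 - W) (1 - Wᴴ)⁻¹ (1 - W)⁻¹ hBiB hCCi hK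
  have b3 := uc_block3 U Uᴴ (1 - Wᴴ) (1 - W) (1 - Wᴴ)⁻¹ (1 - W)⁻¹ hBiB hCCi hK
  have b4 := uc_block4 U Uᴴ (1 - Wᴴ) (1 - W) (1 - Wᴴ)⁻¹ (1 - W)⁻¹ hBiB hCCi hK
  rw [sub_sub_cancel] at b2 b3 b4
  rw [Matrix.mem_unitaryGroup_iff]
  have hstar : star (Matrix.fromBlocks
      (1 - U * (1 - Wᴴ)⁻¹ * Uᴴ) U
      ((1 - W) * (1 - Wᴴ)⁻¹ * Uᴴ) W)
      = Matrix.fromBlocks (1 - U * (1 - W)⁻¹ * Uᴴ) (U * (1 - W)⁻¹ * (1 - Wᴴ)) Uᴴ Wᴴ := by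
    show conjTranspose _ = _
    rw [Matrix.fromBlocks_conjTranspose]
    refine Matrix.fromBlocks_inj.mpr ⟨?_, ?_, ?_, ?_⟩
    · simp only [conjTranspose_sub, conjTranspose_one, conjTranspose_mul,
        conjTranspose_conjTranspose, Matrix.conjTranspose_nonsing_inv, Matrix.mul_assoc]
    · simp only [conjTranspose_sub, conjTranspose_one, conjTranspose_mul,
        conjTranspose_conjTranspose, Matrix.conjTranspose_nonsing_inv, Matrix.mul_assoc]
    · rfl
    · rfl
  rw [hstar, Matrix.fromBlocks_multiply, ← Matrix.fromBlocks_one]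
  rw [Matrix.fromBlocks_inj]
  refine ⟨?_, ?_, ?_, ?_⟩
  · simpa [Matrix.mul_assoc] using b1
  · simpa [Matrix.mul_assoc] using b2
  · simpa [Matrix.mul_assoc] using b3
  · simpa [Matrix.mul_assoc] using b4
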